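/- For every strictly decreasing probability distribution Q = {q_k : k ≥ 1} on a countably infinite alphabet with all q_k > 0, there exists a probability distribution P = {p_k : k ≥ 1} with all p_k > 0 such that p_k ≤ q_k for every k ≥ 2 (so P has a thinner tail than Q in the usual sense), yet Q does not dominate P: for every positive integer M there exists k ≥ 1 with #{i ≥ 1 : q_{k+1} < p_i ≤ q_k} > M. -/

import Mathlib

open Filter Topology

private def aa : ℕ → ℕ
  | 0 => 2
  | (m+1) => aa m + (m+1)

private lemma aa_ge (m : ℕ) : m + 2 ≤ aa m := by
  induction m with
  | zero => simp [aa]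
  | succ n ih => simp only [aa]; omega

private lemma aa_mono : Monotone aa := by
  apply monotone_nat_of_le_succ
  intro n; simp [aa]

private noncomputable def bb (i : ℕ) : ℕ := Nat.findGreatest (fun m => aa m ≤ i) i

private lemma bb_le (i : ℕ) (hi : 2 ≤ i) : aa (bb i) ≤ i := by
  exact Nat.findGreatest_spec (P := fun m => aa m ≤ i) (Nat.zero_le i)
    (show aa 0 ≤ i by simpa [aa] using hi)

private lemma bb_lt (i : ℕ) : i < aa (bb i + 1) := by
  by_contra h
  push_neg at h
  rcases le_or_gt (bb i + 1) i with h1 | h1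
  · have h2 : bb i + 1 ≤ bb i := Nat.le_findGreatest h1 h
    omega
  · have := aa_ge (bb i + 1)
    omega

private lemma bb_eq (m i : ℕ) (h1 : aa m ≤ i) (h2 : i < aa (m+1)) : bb i = m := by
  have hm2 : m + 2 ≤ i := le_trans (aa_ge m) h1
  have hge : m ≤ bb i := Nat.le_findGreatest (by omega) h1
  have hle : bb i ≤ m := by
    by_contra h
    push_neg at h
    have : aa (m+1) ≤ aa (bb i) := aa_mono h
    have := bb_le i (by omega)
    omega
  omega

/-- For every strictly decreasing positive distribution `Q` there is a positive
distribution `P` with `p_k ≤ q_k` for all `k ≥ 2` (a thinner tail in the usual sense)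
such that `Q` does not dominate `P`: the number of terms `p_i` in `(q_{k+1}, q_k]`
is unbounded over `k`. -/
theorem stmt17 (q : ℕ → ℝ) (hq : ∀ k, 0 < q k) (hqsum : ∑' k, q k = 1)
    (hqanti : StrictAnti q) :
    ∃ p : ℕ → ℝ, (∀ k, 0 < p k) ∧ (∑' k, p k = 1) ∧
      (∀ k : ℕ, 2 ≤ k → p k ≤ q k) ∧
      ∀ M : ℕ, 1 ≤ M →
        ∃ k : ℕ, (M : ℕ∞) < {i : ℕ | q (k + 1) < p i ∧ p i ≤ q k}.encard := by
  have hqsummable : Summable q := by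
    by_contra h
    rw [tsum_eq_zero_of_not_summable h] at hqsum
    norm_num at hqsum
  set f : ℕ → ℝ := fun i => q (aa (bb i + 1)) with hf
  -- thinness of f
  have hfle : ∀ i : ℕ, 2 ≤ i → f i ≤ q i := by
    intro i _
    exact hqanti.antitone (le_of_lt (bb_lt i))
  have hfpos : ∀ i, 0 < f i := fun i => hq _
  -- summability of the tail
  have hsum2 : Summable (fun i => q (i + 2)) := hqsummable.comp_injective (fun a b => by omega)
  have hfs2 : Summable (fun i => f (i + 2)) := by
    apply Summable.of_nonneg_of_le (fun i => le_of_lt (hfpos _)) (fun i => hfle (i+2) (by omega)) hsum2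
  set S : ℝ := ∑' i, f (i + 2) with hS
  have hSnn : 0 ≤ S := tsum_nonneg (fun i => le_of_lt (hfpos _))
  have htail : ∑' i, q (i + 2) = 1 - (q 0 + q 1) := by
    have := Summable.sum_add_tsum_nat_add 2 hqsummable
    rw [hqsum] at this
    simp only [Finset.sum_range_succ, Finset.sum_range_zero, zero_add] at this
    linarith
  have hSlt : S < 1 := by
    have h1 : S ≤ ∑' i, q (i + 2) :=
      Summable.tsum_le_tsum (fun i => hfle (i+2) (by omega)) hfs2 hsum2
    have := hq 0; have := hq 1
    rw [htail] at h1; linarith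
  set p : ℕ → ℝ := fun i => if i < 2 then (1 - S)/2 else f i with hp
  have hp2 : ∀ i, p (i + 2) = f (i + 2) := by intro i; simp [hp]
  refine ⟨p, ?_, ?_, ?_, ?_⟩
  · intro k
    by_cases h : k < 2
    · simp [hp, h, show k ≤ 1 by omega]; linarith
    · simp [hp, h, show ¬ k ≤ 1 by omega]; exact hfpos k
  · have hps : Summable p := by
      rw [← summable_nat_add_iff 2]
      simpa [hp2] using hfs2
    have := Summable.sum_add_tsum_nat_add 2 hps
    rw [show (∑' i, p (i + 2)) = S by rw [hS]; exact tsum_congr hp2] at this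
    rw [← this]
    simp [Finset.sum_range_succ, hp]
  · intro k hk
    have : ¬ k < 2 := by omega
    simp only [hp, this, if_false]
    exact hfle k hk
  · intro M _
    refine ⟨aa (M + 1), ?_⟩
    have hsub : (↑(Finset.Ico (aa M) (aa (M+1))) : Set ℕ) ⊆
        {i : ℕ | q (aa (M+1) + 1) < p i ∧ p i ≤ q (aa (M+1))} := by
      intro i hi
      simp only [Finset.coe_Ico, Set.mem_Ico] at hi
      have hbi : bb i = M := bb_eq M i hi.1 hi.2
      have hi2 : 2 ≤ i := by have := aa_ge M; omega
      have hpi : p i = q (aa (M+1)) := by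
        simp only [hp, hf]
        rw [if_neg (by omega), hbi]
      constructor
      · rw [hpi]; exact hqanti (by omega)
      · rw [hpi]
    have hcard : (Finset.Ico (aa M) (aa (M+1))).card = M + 1 := by
      rw [Nat.card_Ico]
      simp [aa]
    calc (M : ℕ∞) < (M + 1 : ℕ) := by exact_mod_cast Nat.lt_succ_self M
      _ = (↑(Finset.Ico (aa M) (aa (M+1))) : Set ℕ).encard := by
          rw [Set.encard_coe_eq_coe_finsetCard, hcard]
      _ ≤ _ := Set.encard_mono hsub
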